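/- Let H be a complex Hilbert space with triple product {x, y, z} = (1/2)(⟨x, y⟩ z + ⟨z, y⟩ x), and let h, k ∈ H be orthonormal vectors. Then {h, k, {k, h, h}} = (1/4) h ≠ 0 while {k, h, {h, k, h}} = 0. Consequently, if dim H ≥ 2, there is no constant γ > 0 satisfying ‖{a, b, {x, y, z}}‖ ≤ γ‖{x, y, {a, b, z}}‖ for all a, b, x, y, z ∈ H. -/

import Mathlib

/-- The rank-one Cartan factor triple product on a complex Hilbert space,
written with an inner product `⟨x, y⟩ := inner y x` that is linear in the
first variable and conjugate-linear in the second: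
`{x, y, z} = (1/2)(⟨x, y⟩ z + ⟨z, y⟩ x)`. -/
noncomputable def trip {H : Type*} [NormedAddCommGroup H] [InnerProductSpace ℂ H]
    (x y z : H) : H :=
  (1/2 : ℂ) • ((inner ℂ y x : ℂ) • z + (inner ℂ y z : ℂ) • x)


theorem stmt_13 (H : Type*) [NormedAddCommGroup H] [InnerProductSpace ℂ H]
    [CompleteSpace H] (h k : H) (hh : ‖h‖ = 1) (hk : ‖k‖ = 1)
    (hhk : (inner ℂ k h : ℂ) = 0) :
    trip h k (trip k h h) = (1/4 : ℂ) • h ∧ (1/4 : ℂ) • h ≠ 0 ∧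
    trip k h (trip h k h) = 0 ∧
    ¬ ∃ γ : ℝ, 0 < γ ∧ ∀ a b x y z : H,
        ‖trip a b (trip x y z)‖ ≤ γ * ‖trip x y (trip a b z)‖ := by
  have hkh : (inner ℂ h k : ℂ) = 0 := by
    rw [← inner_conj_symm, hhk, map_zero]
  have hhh : (inner ℂ h h : ℂ) = 1 := by
    rw [inner_self_eq_norm_sq_to_K, hh]; norm_num
  have hkk : (inner ℂ k k : ℂ) = 1 := by
    rw [inner_self_eq_norm_sq_to_K, hk]; norm_num
  have h1 : trip k h h = (1/2 : ℂ) • k := by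
    simp [trip, hkh, hhh, hh]
  have h2 : trip h k (trip k h h) = (1/4 : ℂ) • h := by
    rw [h1]
    simp only [trip, inner_smul_right, hhk, hkk]
    module
  have h3 : trip h k h = 0 := by
    simp [trip, hhk]
  have h4 : trip k h (trip h k h) = 0 := by
    rw [h3]
    simp [trip]
  have hne : (1/4 : ℂ) • h ≠ 0 := by
    intro hc
    have : h ≠ 0 := by
      intro h0; rw [h0, norm_zero] at hh; norm_num at hh
    exact this (by simpa using smul_eq_zero.mp hc |>.resolve_left (by norm_num))
  refine ⟨h2, hne, h4, ?_⟩
  rintro ⟨γ, hγ, hall⟩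
  have := hall h k k h h
  rw [h2, h4, norm_zero, mul_zero] at this
  exact hne (norm_le_zero_iff.mp this)
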